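/- arXiv:2201.12548 — 2 statements merged into one kernel-verified Lean document; each statement's English description precedes it below -/
import Mathlib

section
/- Let T(d) = d·ln(1 + ξ(d)) with ξ(d) = A·e^{-Kd}/d², A > 0, K ≥ 0, d > 0. A point d° > 0 is a stationary point of T (i.e., T'(d°) = 0) if and only if ξ° = ξ(d°) satisfies ln(1+ξ°)·(1+ξ°)/ξ° = 2 + K·d°. -/
theorem stmt5 (A K : ℝ) (hA : 0 < A) (hK : 0 ≤ K)
    (ξ T : ℝ → ℝ)
    (hξ : ∀ d, ξ d = A * Real.exp (-K * d) / d ^ 2)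
    (hT : ∀ d, T d = d * Real.log (1 + ξ d)) :
    ∀ d : ℝ, 0 < d →
      (deriv T d = 0 ↔ Real.log (1 + ξ d) * (1 + ξ d) / ξ d = 2 + K * d) := by
  intro d hd
  have hξf : ξ = fun x => A * Real.exp (-K * x) / x ^ 2 := funext hξ
  have hTf : T = fun x => x * Real.log (1 + ξ x) := funext hT
  have hs : 0 < ξ d := by
    rw [hξ d]
    positivity
  have h1s : (0:ℝ) < 1 + ξ d := by linarith
  -- derivative of ξ
  have hlin : HasDerivAt (fun x : ℝ => -K * x) (-K) d := by
    simpa using (hasDerivAt_id d).const_mul (-K)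
  have hu : HasDerivAt (fun x : ℝ => A * Real.exp (-K * x))
      (A * (Real.exp (-K * d) * -K)) d := by
    simpa using (hlin.exp.const_mul A)
  have hv : HasDerivAt (fun x : ℝ => x ^ 2) (2 * d) d := by
    simpa using hasDerivAt_pow 2 d
  have hd2 : d ^ 2 ≠ 0 := by positivity
  have hξ' : HasDerivAt ξ
      ((A * (Real.exp (-K * d) * -K) * d ^ 2 - A * Real.exp (-K * d) * (2 * d)) / (d ^ 2) ^ 2)
      d := by
    rw [hξf]; exact hu.div hv hd2
  have h1ξ : HasDerivAt (fun x => 1 + ξ x) ((A * (Real.exp (-K * d) * -K) * d ^ 2 - A * Real.exp (-K * d) * (2 * d)) / (d ^ 2) ^ 2) d := by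
    exact hξ'.const_add 1
  have hlog := h1ξ.log (ne_of_gt h1s)
  have hTd : HasDerivAt T
      (1 * Real.log (1 + ξ d) + d * (((A * (Real.exp (-K * d) * -K) * d ^ 2 - A * Real.exp (-K * d) * (2 * d)) / (d ^ 2) ^ 2) / (1 + ξ d))) d := by
    rw [hTf]
    exact (hasDerivAt_id d).mul hlog
  rw [hTd.deriv]
  -- express A * exp(-K*d) in terms of ξ d
  have hAe : A * Real.exp (-K * d) = ξ d * d ^ 2 := by
    rw [hξ d]; field_simp
  have key : 1 * Real.log (1 + ξ d) + d * (((A * (Real.exp (-K * d) * -K) * d ^ 2 - A * Real.exp (-K * d) * (2 * d)) / (d ^ 2) ^ 2) / (1 + ξ d))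
      = (Real.log (1 + ξ d) * (1 + ξ d) - (2 + K * d) * ξ d) / (1 + ξ d) := by
    have hnum : A * (Real.exp (-K * d) * -K) * d ^ 2 - A * Real.exp (-K * d) * (2 * d)
        = ξ d * d ^ 2 * -K * d ^ 2 - ξ d * d ^ 2 * (2 * d) := by
      rw [← hAe]; ring
    rw [hnum]
    field_simp
    ring
  rw [key]
  rw [div_eq_zero_iff]
  constructor
  · rintro (h | h)
    · have : Real.log (1 + ξ d) * (1 + ξ d) = (2 + K * d) * ξ d := by linarith
      rw [div_eq_iff (ne_of_gt hs), this]
    · exact absurd h (ne_of_gt h1s)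
  · intro h
    left
    rw [div_eq_iff (ne_of_gt hs)] at h
    linarith
end

section
/- Let T(d) = d·ln(1 + A·e^{-Kd}/d²), A > 0, K ≥ 0, on (0, ∞). There exists a unique d° > 0 such that T is strictly increasing on (0, d°) and strictly decreasing on (d°, ∞); in particular, T is strictly quasiconcave on (0, ∞) and d° is its unique global maximizer. -/
-- Auxiliary: the SNR function g(d) = A e^{-Kd}/d^2 and the derivative
-- h(d) = T'(d) = log(1+g) - (Kd+2) g/(1+g).
noncomputable def gf (A K d : ℝ) : ℝ := A * Real.exp (-K*d) / d^2
noncomputable def hf (A K d : ℝ) : ℝ :=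
  Real.log (1 + gf A K d) - (K*d+2) * (gf A K d / (1 + gf A K d))

lemma gf_pos {A K d : ℝ} (hA : 0 < A) (hd : 0 < d) : 0 < gf A K d := by
  unfold gf; positivity

-- key one-variable inequality: u ↦ log(1+u) - c u/(1+u) is strictly increasing on [c-1, ∞)
lemma psi_lt {c u v : ℝ} (hc : 1 ≤ c) (hv : c - 1 ≤ v) (huv : v < u) :
    Real.log (1+v) - c*(v/(1+v)) < Real.log (1+u) - c*(u/(1+u)) := by
  have hv0 : (0:ℝ) < 1 + v := by linarith
  have hu0 : (0:ℝ) < 1 + u := by linarith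
  have hx : (0:ℝ) < (1+v)/(1+u) := by positivity
  have hx1 : (1+v)/(1+u) ≠ 1 := by
    intro hcontra
    rw [div_eq_one_iff_eq hu0.ne'] at hcontra
    linarith
  have hlog := Real.log_lt_sub_one_of_pos hx hx1
  rw [Real.log_div hv0.ne' hu0.ne'] at hlog
  have harg : (1+v)/(1+u) - 1 = -((u-v)/(1+u)) := by field_simp; ring
  rw [harg] at hlog
  have hkey : c*(u/(1+u)) - c*(v/(1+v)) ≤ (u-v)/(1+u) := by
    have heq : c*(u/(1+u)) - c*(v/(1+v)) = c*(u-v)/((1+u)*(1+v)) := by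
      field_simp; ring
    rw [heq, div_le_div_iff₀ (by positivity) hu0]
    nlinarith [mul_le_mul_of_nonneg_right (show c ≤ 1+v by linarith)
      (show (0:ℝ) ≤ (u-v)*(1+u) by nlinarith)]
  linarith

lemma gf_anti {A K : ℝ} (hA : 0 < A) (hK : 0 ≤ K) {d d' : ℝ} (hd : 0 < d) (hdd : d < d') :
    gf A K d' < gf A K d := by
  unfold gf
  have h1 : Real.exp (-K*d') ≤ Real.exp (-K*d) := Real.exp_le_exp.mpr (by nlinarith)
  calc A * Real.exp (-K*d') / d'^2 ≤ A * Real.exp (-K*d) / d'^2 := by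
        apply div_le_div_of_nonneg_right ?_ (by positivity)
        nlinarith
    _ < A * Real.exp (-K*d) / d^2 := by
        apply div_lt_div_of_pos_left (by positivity) (by positivity) (by nlinarith)

-- where g(d) ≤ Kd+1, we have h(d) < 0
lemma hf_neg {A K d : ℝ} (hA : 0 < A) (hd : 0 < d) (hle : gf A K d ≤ K*d+1) :
    hf A K d < 0 := by
  set u := gf A K d with hu
  have hu0 : 0 < u := gf_pos hA hd
  have hu1 : (0:ℝ) < 1 + u := by linarith
  have hlog : Real.log (1+u) < u := by
    have := Real.log_lt_sub_one_of_pos hu1 (by linarith)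
    linarith
  have h2 : u - (K*d+2) * (u/(1+u)) ≤ 0 := by
    rw [mul_div_assoc'] at *
    rw [sub_nonpos, le_div_iff₀ hu1]
    nlinarith
  unfold hf
  rw [← hu]
  linarith

-- h is strictly decreasing on the region where g(d') ≥ Kd'+1
lemma hf_lt {A K : ℝ} (hA : 0 < A) (hK : 0 ≤ K) {d d' : ℝ} (hd : 0 < d) (hdd : d < d')
    (hg : K*d'+1 ≤ gf A K d') : hf A K d' < hf A K d := by
  set u' := gf A K d' with hu'
  set u := gf A K d with hu
  have huu : u' < u := gf_anti hA hK hd hdd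
  have hu'0 : 0 < u' := gf_pos hA (hd.trans hdd)
  have hstep1 : hf A K d' ≤ Real.log (1+u') - (K*d+2) * (u'/(1+u')) := by
    unfold hf
    rw [← hu']
    have : (0:ℝ) ≤ (K*d' - K*d) * (u'/(1+u')) := by
      apply mul_nonneg (by nlinarith)
      positivity
    nlinarith
  have hstep2 : Real.log (1+u') - (K*d+2) * (u'/(1+u')) < Real.log (1+u) - (K*d+2) * (u/(1+u)) := by
    apply psi_lt (by nlinarith) (by nlinarith) huu
  have hfd : hf A K d = Real.log (1+u) - (K*d+2)*(u/(1+u)) := by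
    unfold hf; rw [← hu]
  rw [hfd]
  linarith

-- T has derivative h(d) at every d > 0
lemma T_hasDerivAt {A K d : ℝ} (hA : 0 < A) (hd : 0 < d) :
    HasDerivAt (fun x => x * Real.log (1 + A * Real.exp (-K * x) / x ^ 2)) (hf A K d) d := by
  have hd0 : d ≠ 0 := ne_of_gt hd
  have hg0 : 0 < gf A K d := gf_pos hA hd
  have hg0' : 0 < A * Real.exp (-K*d) / d^2 := hg0
  have hne : 1 + A * Real.exp (-K*d) / d^2 ≠ 0 := by nlinarith
  have hlin : HasDerivAt (fun x : ℝ => -K * x) (-K) d := by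
    simpa using (hasDerivAt_id d).const_mul (-K)
  have hexp : HasDerivAt (fun x : ℝ => Real.exp (-K*x)) (Real.exp (-K*d) * (-K)) d := hlin.exp
  have hnum : HasDerivAt (fun x : ℝ => A * Real.exp (-K*x)) (A * (Real.exp (-K*d) * (-K))) d :=
    hexp.const_mul A
  have hden : HasDerivAt (fun x : ℝ => x^2) (2 * d) d := by
    simpa using hasDerivAt_pow 2 d
  have hgder : HasDerivAt (fun x : ℝ => A * Real.exp (-K*x) / x^2)
      ((A * (Real.exp (-K*d) * (-K)) * d^2 - A * Real.exp (-K*d) * (2*d)) / (d^2)^2) d :=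
    hnum.div hden (pow_ne_zero 2 hd0)
  have hlog := (((hasDerivAt_const d (1:ℝ)).add hgder).log hne)
  have hmul := (hasDerivAt_id d).mul hlog
  refine hmul.congr_deriv ?_
  simp only [Pi.add_apply, id]
  unfold hf gf
  field_simp
  ring

lemma hf_contOn {A K : ℝ} (hA : 0 < A) : ContinuousOn (hf A K) (Set.Ioi 0) := by
  have hgc : ContinuousOn (gf A K) (Set.Ioi 0) := by
    unfold gf
    apply ContinuousOn.div (by fun_prop) (by fun_prop)
    intro x hx
    exact pow_ne_zero 2 (ne_of_gt hx)
  have hne : ∀ x ∈ Set.Ioi (0:ℝ), 1 + gf A K x ≠ 0 := by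
    intro x hx
    have := gf_pos (K := K) hA hx
    intro h; linarith [this]
  unfold hf
  apply ContinuousOn.sub
  · exact ContinuousOn.log (continuousOn_const.add hgc) hne
  · exact ContinuousOn.mul (by fun_prop) (hgc.div (continuousOn_const.add hgc) hne)

theorem stmt7 (A K : ℝ) (hA : 0 < A) (hK : 0 ≤ K)
    (T : ℝ → ℝ)
    (hT : ∀ d, T d = d * Real.log (1 + A * Real.exp (-K * d) / d ^ 2)) :
    ∃! dopt : ℝ, 0 < dopt ∧
      StrictMonoOn T (Set.Ioc 0 dopt) ∧
      StrictAntiOn T (Set.Ici dopt) ∧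
      ∀ d : ℝ, 0 < d → d ≠ dopt → T d < T dopt := by
  have hTf : T = fun d => d * Real.log (1 + A * Real.exp (-K * d) / d ^ 2) := funext hT
  subst hTf
  -- a small point where h > 0
  set δ : ℝ := min 1 (Real.exp ((Real.log A - 2*K - 2)/2 - 1)) with hδdef
  have hδpos : 0 < δ := lt_min one_pos (Real.exp_pos _)
  have hδ1 : δ ≤ 1 := min_le_left _ _
  have hlogδ : Real.log δ ≤ (Real.log A - 2*K - 2)/2 - 1 := by
    calc Real.log δ ≤ Real.log (Real.exp ((Real.log A - 2*K - 2)/2 - 1)) :=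
          Real.log_le_log hδpos (min_le_right _ _)
      _ = (Real.log A - 2*K - 2)/2 - 1 := Real.log_exp _
  have hδfpos : 0 < hf A K δ := by
    set u := gf A K δ with hu
    have hu0 : 0 < u := gf_pos hA hδpos
    have hu1 : (0:ℝ) < 1 + u := by linarith
    have hul : Real.log u = Real.log A + (-K*δ) - 2*Real.log δ := by
      rw [hu]
      unfold gf
      rw [Real.log_div (by positivity) (by positivity),
        Real.log_mul (ne_of_gt hA) (Real.exp_ne_zero _), Real.log_exp, Real.log_pow]
      push_cast; ring
    have hlog1 : Real.log u ≤ Real.log (1+u) := Real.log_le_log hu0 (by linarith)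
    have hterm : (K*δ+2) * (u/(1+u)) ≤ K*δ+2 := by
      apply mul_le_of_le_one_right (by nlinarith)
      rw [div_le_one hu1]
      linarith
    have hKδ : K*δ ≤ K := by nlinarith
    have : hf A K δ = Real.log (1+u) - (K*δ+2) * (u/(1+u)) := by
      unfold hf; rw [← hu]
    rw [this]
    linarith
  -- a big point where h < 0
  set β : ℝ := Real.sqrt A + 1 with hβdef
  have hsA : 0 < Real.sqrt A := Real.sqrt_pos.mpr hA
  have hβpos : (0:ℝ) < β := by linarith
  have hδβ : δ < β := by linarith
  have hgβ : gf A K β ≤ K*β+1 := by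
    have he1 : Real.exp (-K*β) ≤ 1 := Real.exp_le_one_iff.mpr (by nlinarith)
    have hAβ : A < β^2 := by
      have := Real.sq_sqrt hA.le
      nlinarith
    have : gf A K β ≤ A / β^2 := by
      unfold gf
      apply div_le_div_of_nonneg_right ?_ (by positivity)
      nlinarith
    have h2 : A / β^2 < 1 := (div_lt_one (by positivity)).mpr hAβ
    nlinarith
  have hβfneg : hf A K β < 0 := hf_neg hA hβpos hgβ
  -- IVT gives the critical point
  have hsub : Set.Icc δ β ⊆ Set.Ioi (0:ℝ) := fun x hx => lt_of_lt_of_le hδpos hx.1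
  have hivt := intermediate_value_Ioo' (f := hf A K) (le_of_lt hδβ)
    ((hf_contOn (K := K) hA).mono hsub)
  have h0mem : (0:ℝ) ∈ Set.Ioo (hf A K β) (hf A K δ) := ⟨hβfneg, hδfpos⟩
  obtain ⟨dopt, hdmem, hroot⟩ := hivt h0mem
  have hdopt_pos : 0 < dopt := lt_trans hδpos hdmem.1
  -- sign pattern of h
  have hgopt : K*dopt+1 ≤ gf A K dopt := by
    by_contra hcon
    push_neg at hcon
    have := hf_neg hA hdopt_pos hcon.le
    rw [hroot] at this
    exact lt_irrefl 0 this
  have hpos : ∀ x, 0 < x → x < dopt → 0 < hf A K x := by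
    intro x hx hxd
    have := hf_lt hA hK hx hxd hgopt
    rw [hroot] at this
    exact this
  have hneg : ∀ x, dopt < x → hf A K x < 0 := by
    intro x hx
    by_cases hc : gf A K x ≤ K*x+1
    · exact hf_neg hA (hdopt_pos.trans hx) hc
    · push_neg at hc
      have := hf_lt hA hK hdopt_pos hx hc.le
      rw [hroot] at this
      exact this
  -- monotonicity from derivative signs
  have hmono : StrictMonoOn (fun d => d * Real.log (1 + A * Real.exp (-K * d) / d ^ 2))
      (Set.Ioc 0 dopt) := by
    apply strictMonoOn_of_deriv_pos (convex_Ioc 0 dopt)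
    · intro x hx
      exact (T_hasDerivAt hA hx.1).continuousAt.continuousWithinAt
    · intro x hx
      rw [interior_Ioc] at hx
      rw [(T_hasDerivAt hA hx.1).deriv]
      exact hpos x hx.1 hx.2
  have hanti : StrictAntiOn (fun d => d * Real.log (1 + A * Real.exp (-K * d) / d ^ 2))
      (Set.Ici dopt) := by
    apply strictAntiOn_of_deriv_neg (convex_Ici dopt)
    · intro x hx
      exact (T_hasDerivAt hA (lt_of_lt_of_le hdopt_pos hx)).continuousAt.continuousWithinAt
    · intro x hx
      rw [interior_Ici] at hx
      rw [(T_hasDerivAt hA (hdopt_pos.trans hx)).deriv]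
      exact hneg x hx
  have hmax : ∀ d : ℝ, 0 < d → d ≠ dopt →
      (fun d => d * Real.log (1 + A * Real.exp (-K * d) / d ^ 2)) d <
      (fun d => d * Real.log (1 + A * Real.exp (-K * d) / d ^ 2)) dopt := by
    intro d hd hne
    rcases lt_or_gt_of_ne hne with hlt | hgt
    · exact hmono ⟨hd, hlt.le⟩ ⟨hdopt_pos, le_refl _⟩ hlt
    · exact hanti Set.self_mem_Ici (le_of_lt hgt) hgt
  refine ⟨dopt, ⟨hdopt_pos, hmono, hanti, hmax⟩, ?_⟩
  rintro y ⟨hy_pos, -, -, hy_max⟩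
  by_contra hne
  have h1 := hy_max dopt hdopt_pos (fun h => hne h.symm)
  have h2 := hmax y hy_pos hne
  simp only at h1 h2
  linarith
end
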